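/- Let w : [0, ∞) → ℝ be Borel measurable with −1/c ≤ w(x) ≤ 0 for all x ≥ 0, and set T = (1/λ)(1 + λ/c) + 1/c. Then for every t ≥ 0 and φ ≥ 0, Jw(t, φ) ≥ (φ + 1)t − (1/λ)(1 + λ/c) − 1/c; in particular Jw(t, φ) ≥ 0 whenever t ≥ T, and consequently inf_{t ≥ 0} Jw(t, φ) = inf_{0 ≤ t ≤ T} Jw(t, φ) for every φ ≥ 0. -/

import Mathlib

open MeasureTheory Real

/-- Standard Gaussian density on ℝ. -/
noncomputable def gaussDensity (z : ℝ) : ℝ := Real.exp (-z ^ 2 / 2) / Real.sqrt (2 * Real.pi)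

/-- One-step update of the conditional odds process upon observing a normalized
increment `z` after a waiting time `t`, starting from odds `φ`. -/
noncomputable def jfun (lam alp t φ z : ℝ) : ℝ :=
  Real.exp (alp * z * Real.sqrt t + (lam - alp ^ 2 / 2) * t) * φ +
    ∫ u in (0:ℝ)..t, lam * Real.exp ((lam + alp * z / Real.sqrt t) * u - alp ^ 2 * u ^ 2 / (2 * t))


/-- Deterministic evolution of the odds process between observations. -/
noncomputable def varphi (lam t x : ℝ) : ℝ := Real.exp (lam * t) * (x + 1) - 1

/-- The averaging operator `K`: Gaussian expectation of `w` applied to the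
one-step odds update. -/
noncomputable def Kop (lam alp : ℝ) (w : ℝ → ℝ) (t φ : ℝ) : ℝ :=
  ∫ z : ℝ, w (jfun lam alp t φ z) * gaussDensity z

/-- The jump operator `J`: running cost until the next observation at time `t`,
plus the discounted continuation value after that observation. -/
noncomputable def Jop (lam alp c : ℝ) (w : ℝ → ℝ) (t φ : ℝ) : ℝ :=
  (∫ u in (0:ℝ)..t, Real.exp (-(lam * u)) * (varphi lam u φ - lam / c)) +
    (if 0 < t then Real.exp (-(lam * t)) * Kop lam alp w t φ else 0)

/-- The optimized jump operator `J₀ w(φ) = inf_{t ≥ 0} J w(t, φ)`. -/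
noncomputable def J0op (lam alp c : ℝ) (w : ℝ → ℝ) (φ : ℝ) : ℝ :=
  ⨅ t : Set.Ici (0:ℝ), Jop lam alp c w t φ

lemma gaussDensity_nonneg (z : ℝ) : 0 ≤ gaussDensity z :=
  div_nonneg (Real.exp_pos _).le (Real.sqrt_nonneg _)

lemma gaussDensity_eq (z : ℝ) :
    gaussDensity z = Real.exp (-(1/2 : ℝ) * z ^ 2) / Real.sqrt (2 * Real.pi) := by
  unfold gaussDensity; congr 1; congr 1; ring

lemma integrable_gaussDensity : Integrable gaussDensity := by
  have : gaussDensity = fun z => Real.exp (-(1/2 : ℝ) * z ^ 2) * (Real.sqrt (2 * Real.pi))⁻¹ := by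
    funext z; rw [gaussDensity_eq, div_eq_mul_inv]
  rw [this]
  exact (integrable_exp_neg_mul_sq (by norm_num : (0:ℝ) < 1/2)).mul_const _

lemma integral_gaussDensity : ∫ z : ℝ, gaussDensity z = 1 := by
  simp_rw [gaussDensity_eq, div_eq_mul_inv]
  rw [integral_mul_const, integral_gaussian]
  have h : π / (1 * 2⁻¹) = 2 * π := by ring
  rw [h, mul_inv_cancel₀]
  positivity

lemma int_exp_neg (lam : ℝ) (hlam : 0 < lam) (t : ℝ) :
    ∫ u in (0:ℝ)..t, Real.exp (-(lam * u)) = (1 - Real.exp (-(lam * t))) / lam := by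
  have h : ∀ u ∈ Set.uIcc (0:ℝ) t,
      HasDerivAt (fun x => -Real.exp (-(lam * x)) / lam) (Real.exp (-(lam * u))) u := by
    intro u _
    have h1 : HasDerivAt (fun x : ℝ => -(lam * x)) (-lam) u := by
      simpa using ((hasDerivAt_id u).const_mul lam).fun_neg
    have h3 := (h1.exp.fun_neg).div_const lam
    have h4 : Real.exp (-(lam * u)) = -(Real.exp (-(lam * u)) * -lam) / lam := by
      rw [eq_div_iff hlam.ne']; ring
    rw [h4]; exact h3
  rw [intervalIntegral.integral_eq_sub_of_hasDerivAt h
    ((Real.continuous_exp.comp (by continuity)).intervalIntegrable 0 t)]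
  field_simp
  rw [mul_zero, neg_zero, Real.exp_zero]; ring

lemma jfun_nonneg (lam alp : ℝ) (hlam : 0 < lam) (t φ : ℝ) (ht : 0 ≤ t) (hφ : 0 ≤ φ)
    (z : ℝ) : 0 ≤ jfun lam alp t φ z := by
  unfold jfun
  have h1 : 0 ≤ Real.exp (alp * z * Real.sqrt t + (lam - alp ^ 2 / 2) * t) * φ :=
    mul_nonneg (Real.exp_pos _).le hφ
  have h2 : 0 ≤ ∫ u in (0:ℝ)..t,
      lam * Real.exp ((lam + alp * z / Real.sqrt t) * u - alp ^ 2 * u ^ 2 / (2 * t)) :=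
    intervalIntegral.integral_nonneg ht
      (fun u _ => mul_nonneg hlam.le (Real.exp_pos _).le)
  linarith

lemma Kop_ge (lam alp c : ℝ) (hlam : 0 < lam) (hc : 0 < c) (w : ℝ → ℝ)
    (hwl : ∀ x : ℝ, 0 ≤ x → -1 / c ≤ w x) (t φ : ℝ) (ht : 0 ≤ t) (hφ : 0 ≤ φ) :
    -1 / c ≤ Kop lam alp w t φ := by
  unfold Kop
  by_cases hint : Integrable (fun z => w (jfun lam alp t φ z) * gaussDensity z)
  · have hg : Integrable (fun z => -1 / c * gaussDensity z) :=
      integrable_gaussDensity.const_mul _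
    have hmono : ∀ z : ℝ, -1 / c * gaussDensity z ≤ w (jfun lam alp t φ z) * gaussDensity z :=
      fun z => mul_le_mul_of_nonneg_right (hwl _ (jfun_nonneg lam alp hlam t φ ht hφ z))
        (gaussDensity_nonneg z)
    calc -1 / c = ∫ z : ℝ, -1 / c * gaussDensity z := by
          rw [integral_const_mul, integral_gaussDensity, mul_one]
      _ ≤ _ := integral_mono hg hint hmono
  · rw [integral_undef hint, neg_div]
    have : (0:ℝ) ≤ 1 / c := by positivity
    linarith

lemma Kop_le (lam alp c : ℝ) (hlam : 0 < lam) (w : ℝ → ℝ)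
    (hwu : ∀ x : ℝ, 0 ≤ x → w x ≤ 0) (t φ : ℝ) (ht : 0 ≤ t) (hφ : 0 ≤ φ) :
    Kop lam alp w t φ ≤ 0 :=
  integral_nonpos fun z => mul_nonpos_of_nonpos_of_nonneg
    (hwu _ (jfun_nonneg lam alp hlam t φ ht hφ z)) (gaussDensity_nonneg z)

lemma run_int (lam c φ : ℝ) (hlam : 0 < lam) (t : ℝ) :
    ∫ u in (0:ℝ)..t, Real.exp (-(lam * u)) * (varphi lam u φ - lam / c)
      = (φ + 1) * t - (1 + lam / c) * ((1 - Real.exp (-(lam * t))) / lam) := by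
  have key : ∀ u : ℝ, Real.exp (-(lam * u)) * (varphi lam u φ - lam / c)
      = (φ + 1) - (1 + lam / c) * Real.exp (-(lam * u)) := by
    intro u
    unfold varphi
    rw [Real.exp_neg]
    have h := Real.exp_ne_zero (lam * u)
    field_simp
    ring
  simp_rw [key]
  have hint : IntervalIntegrable (fun u : ℝ => (1 + lam / c) * Real.exp (-(lam * u)))
      volume 0 t := Continuous.intervalIntegrable (by continuity) 0 t
  rw [intervalIntegral.integral_sub intervalIntegrable_const hint,
    intervalIntegral.integral_const_mul, int_exp_neg lam hlam, intervalIntegral.integral_const]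
  simp [mul_comm]

lemma Jop_ge (lam alp c : ℝ) (hlam : 0 < lam) (hc : 0 < c) (w : ℝ → ℝ)
    (hwl : ∀ x : ℝ, 0 ≤ x → -1 / c ≤ w x) (t : ℝ) (ht : 0 ≤ t) (φ : ℝ) (hφ : 0 ≤ φ) :
    (φ + 1) * t - (1 / lam) * (1 + lam / c) - 1 / c ≤ Jop lam alp c w t φ := by
  unfold Jop
  rw [run_int lam c φ hlam t]
  have hex := Real.exp_pos (-(lam * t))
  have h1 : (1 + lam / c) * ((1 - Real.exp (-(lam * t))) / lam) ≤ (1 + lam / c) * (1 / lam) := by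
    have hcd : (0:ℝ) ≤ 1 + lam / c := by positivity
    apply mul_le_mul_of_nonneg_left _ hcd
    gcongr
    linarith
  have h2 : -(1 / c) ≤ if 0 < t then Real.exp (-(lam * t)) * Kop lam alp w t φ else 0 := by
    split_ifs with hpos
    · have hK := Kop_ge lam alp c hlam hc w hwl t φ ht hφ
      have he1 : Real.exp (-(lam * t)) ≤ 1 := by
        rw [Real.exp_le_one_iff]
        nlinarith
      have : Real.exp (-(lam * t)) * (-1 / c) ≤ Real.exp (-(lam * t)) * Kop lam alp w t φ :=
        mul_le_mul_of_nonneg_left hK hex.le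
      have h3 : -(1/c) ≤ Real.exp (-(lam * t)) * (-1 / c) := by
        rw [neg_div, mul_neg]
        have : Real.exp (-(lam * t)) * (1 / c) ≤ 1 * (1 / c) :=
          mul_le_mul_of_nonneg_right he1 (by positivity)
        linarith
      linarith
    · have : (0:ℝ) ≤ 1 / c := by positivity
      linarith
  have h4 : (1 / lam) * (1 + lam / c) = (1 + lam / c) * (1 / lam) := by ring
  linarith


/-- With `T = (1/λ)(1 + λ/c) + 1/c`: for `w` valued in `[−1/c, 0]` on `[0, ∞)`,
`J w(t, φ) ≥ (φ + 1)t − (1/λ)(1 + λ/c) − 1/c`; in particular `J w(t, φ) ≥ 0` for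
`t ≥ T`, and the infimum defining `J₀w` may be restricted to `[0, T]`. -/
theorem Jop_lower_bound_and_inf_restrict (lam alp c : ℝ)
    (hlam : 0 < lam) (halp : 0 < alp) (hc : 0 < c)
    (w : ℝ → ℝ) (hw : Measurable w)
    (hwl : ∀ x : ℝ, 0 ≤ x → -1 / c ≤ w x) (hwu : ∀ x : ℝ, 0 ≤ x → w x ≤ 0) :
    (∀ t : ℝ, 0 ≤ t → ∀ φ : ℝ, 0 ≤ φ →
        (φ + 1) * t - (1 / lam) * (1 + lam / c) - 1 / c ≤ Jop lam alp c w t φ) ∧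
    (∀ t : ℝ, (1 / lam) * (1 + lam / c) + 1 / c ≤ t → ∀ φ : ℝ, 0 ≤ φ →
        0 ≤ Jop lam alp c w t φ) ∧
    (∀ φ : ℝ, 0 ≤ φ →
        J0op lam alp c w φ =
          ⨅ t : Set.Icc (0:ℝ) ((1 / lam) * (1 + lam / c) + 1 / c), Jop lam alp c w t φ) := by
  set T : ℝ := (1 / lam) * (1 + lam / c) + 1 / c with hT
  have hT0 : 0 ≤ T := by positivity
  have part1 : ∀ t : ℝ, 0 ≤ t → ∀ φ : ℝ, 0 ≤ φ →
      (φ + 1) * t - (1 / lam) * (1 + lam / c) - 1 / c ≤ Jop lam alp c w t φ :=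
    fun t ht φ hφ => Jop_ge lam alp c hlam hc w hwl t ht φ hφ
  have part2 : ∀ t : ℝ, T ≤ t → ∀ φ : ℝ, 0 ≤ φ → 0 ≤ Jop lam alp c w t φ := by
    intro t ht φ hφ
    have h := part1 t (le_trans hT0 ht) φ hφ
    have h2 : T ≤ (φ + 1) * t := by nlinarith
    rw [hT] at h2
    linarith
  refine ⟨part1, part2, ?_⟩
  intro φ hφ
  have hJ0 : Jop lam alp c w 0 φ = 0 := by simp [Jop]
  have hbd : ∀ t : ℝ, 0 ≤ t → -T ≤ Jop lam alp c w t φ := by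
    intro t ht
    have h1 := part1 t ht φ hφ
    have h0 : 0 ≤ (φ + 1) * t := mul_nonneg (by linarith) ht
    rw [hT]
    linarith
  have hne1 : Nonempty (Set.Ici (0:ℝ)) := ⟨⟨0, Set.self_mem_Ici⟩⟩
  have hne2 : Nonempty (Set.Icc (0:ℝ) T) := ⟨⟨0, Set.left_mem_Icc.mpr hT0⟩⟩
  have hbd1 : BddBelow (Set.range fun t : Set.Ici (0:ℝ) => Jop lam alp c w t φ) :=
    ⟨-T, by rintro x ⟨⟨t, ht⟩, rfl⟩; exact hbd t ht⟩
  have hbd2 : BddBelow (Set.range fun t : Set.Icc (0:ℝ) T => Jop lam alp c w t φ) :=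
    ⟨-T, by rintro x ⟨⟨t, ht, _⟩, rfl⟩; exact hbd t ht⟩
  unfold J0op
  apply le_antisymm
  · apply le_ciInf
    rintro ⟨t, ht0, htT⟩
    exact ciInf_le hbd1 ⟨t, Set.mem_Ici.mpr ht0⟩
  · apply le_ciInf
    rintro ⟨t, ht0⟩
    rcases le_or_gt t T with hle | hgt
    · exact ciInf_le hbd2 ⟨t, Set.mem_Icc.mpr ⟨ht0, hle⟩⟩
    · calc (⨅ s : Set.Icc (0:ℝ) T, Jop lam alp c w s φ) ≤ Jop lam alp c w 0 φ :=
            ciInf_le hbd2 ⟨0, Set.left_mem_Icc.mpr hT0⟩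
        _ ≤ Jop lam alp c w t φ := by
            rw [hJ0]; exact part2 t hgt.le φ hφ
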